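/- Appendix C, Corollary 2(i): let F be a qubit effect with Bloch vector y⃗ and y₀ = Re tr F, and let ρ be a qubit state with Bloch vector r⃗. If Re tr(Fρ) ≥ 1 − ε and y₀ ≤ 1 + ε for some ε ≥ 0, then the Euclidean norm ‖y⃗ − r⃗‖ ≤ √(4ε + ε²). -/

import Mathlib

open Matrix
open scoped ComplexOrder

/-- A qubit state: a positive semidefinite 2×2 complex matrix with trace 1. -/
def QubitState (ρ : Matrix (Fin 2) (Fin 2) ℂ) : Prop :=
  ρ.PosSemidef ∧ ρ.trace = 1

/-- A qubit effect: a 2×2 complex matrix `E` with both `E` and `1 - E` positive semidefinite. -/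
def QubitEffect (E : Matrix (Fin 2) (Fin 2) ℂ) : Prop :=
  E.PosSemidef ∧ (1 - E).PosSemidef

/-- A realization of a 3×3 correlation matrix `P` by three qubit states, a three-outcome
qubit POVM `(M11, M21, M31)` and a two-outcome qubit POVM `(M12, M22)`. -/
def IsRealization (P : Matrix (Fin 3) (Fin 3) ℝ)
    (ρ : Fin 3 → Matrix (Fin 2) (Fin 2) ℂ)
    (M11 M21 M31 M12 M22 : Matrix (Fin 2) (Fin 2) ℂ) : Prop :=
  (∀ x, QubitState (ρ x)) ∧
  QubitEffect M11 ∧ QubitEffect M21 ∧ QubitEffect M31 ∧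
  M11 + M21 + M31 = 1 ∧
  QubitEffect M12 ∧ QubitEffect M22 ∧
  M12 + M22 = 1 ∧
  (∀ x, P x 0 = ((ρ x * M11).trace).re ∧
        P x 1 = ((ρ x * M21).trace).re ∧
        P x 2 = ((ρ x * M12).trace).re)

/-- The USD pattern of zeros and ones of the correlation matrix, Eq. (3). -/
def USDpattern (P : Matrix (Fin 3) (Fin 3) ℝ) : Prop :=
  P 0 2 = 0 ∧ P 1 1 = 0 ∧ P 1 2 = 1 ∧ P 2 0 = 0

/-- The set USD₂ of qubit USD correlations. -/
def USD2 (P : Matrix (Fin 3) (Fin 3) ℝ) : Prop :=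
  USDpattern P ∧
  ∃ ρ M11 M21 M31 M12 M22, IsRealization P ρ M11 M21 M31 M12 M22

/-- A three-outcome qubit POVM is simulable by dichotomic measurements, Eq. (1). -/
def Simulable (M11 M21 M31 : Matrix (Fin 2) (Fin 2) ℂ) : Prop :=
  ∃ p1 p2 p3 : ℝ, ∃ N11 N22 N13 : Matrix (Fin 2) (Fin 2) ℂ,
    0 ≤ p1 ∧ 0 ≤ p2 ∧ 0 ≤ p3 ∧ p1 + p2 + p3 = 1 ∧
    QubitEffect N11 ∧ QubitEffect N22 ∧ QubitEffect N13 ∧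
    M11 = p1 • N11 + p3 • N13 ∧
    M21 = p1 • (1 - N11) + p2 • N22 ∧
    M31 = p2 • (1 - N22) + p3 • (1 - N13)

/-- The set SIM₂ of simulable trichotomic qubit correlations in the minimal scenario. -/
def SIM2 (P : Matrix (Fin 3) (Fin 3) ℝ) : Prop :=
  ∃ ρ M11 M21 M31 M12 M22, IsRealization P ρ M11 M21 M31 M12 M22 ∧
    Simulable M11 M21 M31

/-- The parameterized USD correlation matrix 𝒫(p, q, ξ) of Eq. (4). -/
noncomputable def Pmat (p q ξ : ℝ) : Matrix (Fin 3) (Fin 3) ℝ :=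
  !![p * ξ,       q,           0;
     p * (1 - ξ), 0,           1;
     0,           q * (1 - ξ), ξ]

/-- The three Pauli matrices. -/
noncomputable def pauli : Fin 3 → Matrix (Fin 2) (Fin 2) ℂ :=
  ![!![0, 1; 1, 0], !![0, -Complex.I; Complex.I, 0], !![1, 0; 0, -1]]

/-- The Bloch vector of a 2×2 complex matrix: `(Re tr(A σ₁), Re tr(A σ₂), Re tr(A σ₃))`. -/
noncomputable def bloch (A : Matrix (Fin 2) (Fin 2) ℂ) : Fin 3 → ℝ :=
  fun i => ((A * pauli i).trace).re


section AuxCor2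
private lemma cs3' (x1 x2 x3 u1 u2 u3 : ℝ) :
    (x1*u1+x2*u2+x3*u3)^2 ≤ (x1^2+x2^2+x3^2)*(u1^2+u2^2+u3^2) := by
  nlinarith [sq_nonneg (x1*u2-x2*u1), sq_nonneg (x1*u3-x3*u1), sq_nonneg (x2*u3-x3*u2)]

private lemma key_ineq' (a d b1 b2 p q c1 c2 ε : ℝ)
    (ha : 0 ≤ a) (hd : 0 ≤ d)
    (hdF : b1^2 + b2^2 ≤ a * d) (hdG : b1^2 + b2^2 ≤ (1-a) * (1-d))
    (hp : 0 ≤ p) (hq : 0 ≤ q) (hpq : p + q = 1) (hdr : c1^2 + c2^2 ≤ p * q)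
    (he : 0 ≤ ε)
    (hprob : 1 - ε ≤ a*p + d*q + 2*(b1*c1 + b2*c2))
    (hy0 : a + d ≤ 1 + ε) :
    4*((b1-c1)^2 + (b2-c2)^2) + ((a-d) - (p-q))^2 ≤ 4*ε + ε^2 := by
  have hny : (a-d)^2 + 4*(b1^2+b2^2) ≤ (a+d)^2 := by nlinarith
  have hny2 : (a-d)^2 + 4*(b1^2+b2^2) ≤ (2 - (a+d))^2 := by nlinarith
  have hnr : (p-q)^2 + 4*(c1^2+c2^2) ≤ 1 := by nlinarith
  have hip : 2 - 2*ε ≤ (a+d) + ((a-d)*(p-q) + 4*(b1*c1 + b2*c2)) := by nlinarith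
  have hCS : ((a-d)*(p-q) + 4*(b1*c1 + b2*c2))^2
      ≤ ((a-d)^2 + 4*(b1^2+b2^2)) * ((p-q)^2 + 4*(c1^2+c2^2)) := by
    have h := cs3' (a-d) (2*b1) (2*b2) (p-q) (2*c1) (2*c2)
    calc ((a-d)*(p-q) + 4*(b1*c1 + b2*c2))^2
        = ((a-d)*(p-q)+(2*b1)*(2*c1)+(2*b2)*(2*c2))^2 := by ring
      _ ≤ ((a-d)^2+(2*b1)^2+(2*b2)^2)*((p-q)^2+(2*c1)^2+(2*c2)^2) := h
      _ = ((a-d)^2 + 4*(b1^2+b2^2)) * ((p-q)^2 + 4*(c1^2+c2^2)) := by ring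
  have hsq : ((a-d)*(p-q) + 4*(b1*c1 + b2*c2))^2 ≤ (a+d)^2 := by
    have hnn : (0:ℝ) ≤ (a-d)^2 + 4*(b1^2+b2^2) := by positivity
    nlinarith [hCS, hny, hnr, hnn]
  have hiple : (a-d)*(p-q) + 4*(b1*c1 + b2*c2) ≤ a + d := by
    have h1 := le_abs_self ((a-d)*(p-q) + 4*(b1*c1 + b2*c2))
    have h2 := Real.sqrt_le_sqrt hsq
    rw [Real.sqrt_sq_eq_abs, Real.sqrt_sq_eq_abs,
      abs_of_nonneg (by linarith : (0:ℝ) ≤ a + d)] at h2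
    linarith
  have hylb : 1 - ε ≤ a + d := by linarith
  have hsq1 : ((a+d) - 1)^2 ≤ ε^2 := sq_le_sq' (by linarith) (by linarith)
  have e1 : 4*((b1-c1)^2+(b2-c2)^2) + ((a-d)-(p-q))^2
      = ((a-d)^2 + 4*(b1^2+b2^2)) + ((p-q)^2 + 4*(c1^2+c2^2))
        - 2*((a-d)*(p-q) + 4*(b1*c1+b2*c2)) := by ring
  have e2 : (2 - (a+d))^2 + 1 - 2*(2 - 2*ε - (a+d)) = ((a+d)-1)^2 + 4*ε := by ring
  linarith [hny2, hnr, hip, hsq1]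

private lemma psd_entries' (M : Matrix (Fin 2) (Fin 2) ℂ) (h : M.PosSemidef) :
    (M 0 0).im = 0 ∧ (M 1 1).im = 0 ∧ M 1 0 = (starRingEnd ℂ) (M 0 1) ∧
    0 ≤ (M 0 0).re ∧ 0 ≤ (M 1 1).re ∧
    (M 0 1).re ^ 2 + (M 0 1).im ^ 2 ≤ (M 0 0).re * (M 1 1).re := by
  have hH := h.1
  have h00 : M 0 0 = (starRingEnd ℂ) (M 0 0) := (hH.apply 0 0).symm
  have h11 : M 1 1 = (starRingEnd ℂ) (M 1 1) := (hH.apply 1 1).symm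
  have hi00 : (M 0 0).im = 0 := Complex.conj_eq_iff_im.mp h00.symm
  have hi11 : (M 1 1).im = 0 := Complex.conj_eq_iff_im.mp h11.symm
  have h10 : M 1 0 = (starRingEnd ℂ) (M 0 1) := (hH.apply 1 0).symm
  have hd0 : 0 ≤ M 0 0 := by
    have := h.dotProduct_mulVec_nonneg ![1, 0]
    simpa [dotProduct, mulVec, Fin.sum_univ_two] using this
  have hd1 : 0 ≤ M 1 1 := by
    have := h.dotProduct_mulVec_nonneg ![0, 1]
    simpa [dotProduct, mulVec, Fin.sum_univ_two] using this
  have hdet : 0 ≤ M.det := by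
    rw [hH.det_eq_prod_eigenvalues, Fin.prod_univ_two]
    have h0 : (0:ℂ) ≤ (hH.eigenvalues 0 : ℂ) := by
      rw [Complex.le_def]; constructor
      · simpa using h.eigenvalues_nonneg 0
      · simp
    have h1 : (0:ℂ) ≤ (hH.eigenvalues 1 : ℂ) := by
      rw [Complex.le_def]; constructor
      · simpa using h.eigenvalues_nonneg 1
      · simp
    exact mul_nonneg h0 h1
  have hdet2 : 0 ≤ (M.det).re := (Complex.le_def.mp hdet).1
  rw [Matrix.det_fin_two, h10] at hdet2
  refine ⟨hi00, hi11, h10, (Complex.le_def.mp hd0).1, (Complex.le_def.mp hd1).1, ?_⟩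
  simp [Complex.sub_re, Complex.mul_re, hi00, hi11, Complex.conj_re, Complex.conj_im] at hdet2
  nlinarith [hdet2]

private lemma bloch_eq' (F : Matrix (Fin 2) (Fin 2) ℂ)
    (h10 : F 1 0 = (starRingEnd ℂ) (F 0 1)) :
    bloch F 0 = 2 * (F 0 1).re ∧ bloch F 1 = -2 * (F 0 1).im ∧
    bloch F 2 = (F 0 0).re - (F 1 1).re := by
  refine ⟨?_, ?_, ?_⟩ <;>
  · simp [bloch, pauli, Matrix.trace_fin_two, Matrix.mul_apply, Fin.sum_univ_two, h10]
    ring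

private lemma trace_mul_re' (F ρ : Matrix (Fin 2) (Fin 2) ℂ)
    (hF10 : F 1 0 = (starRingEnd ℂ) (F 0 1)) (hρ10 : ρ 1 0 = (starRingEnd ℂ) (ρ 0 1))
    (hFi0 : (F 0 0).im = 0) (hFi1 : (F 1 1).im = 0)
    (hρi0 : (ρ 0 0).im = 0) (hρi1 : (ρ 1 1).im = 0) :
    ((F * ρ).trace).re = (F 0 0).re * (ρ 0 0).re + (F 1 1).re * (ρ 1 1).re
      + 2 * ((F 0 1).re * (ρ 0 1).re + (F 0 1).im * (ρ 0 1).im) := by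
  simp [Matrix.trace_fin_two, Matrix.mul_apply, Fin.sum_univ_two, hF10, hρ10,
    Complex.add_re, Complex.mul_re, hFi0, hFi1, hρi0, hρi1]
  ring
end AuxCor2

/-- Appendix C, Corollary 2(i): if `Re tr(Fρ) ≥ 1 - ε` and `Re tr F ≤ 1 + ε`, then the
Euclidean distance of the Bloch vectors of `F` and `ρ` is at most `√(4ε + ε²)`. -/
theorem bloch_close_of_high_prob (F ρ : Matrix (Fin 2) (Fin 2) ℂ)
    (hF : QubitEffect F) (hρ : QubitState ρ) (ε : ℝ) (hε : 0 ≤ ε)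
    (hprob : ((F * ρ).trace).re ≥ 1 - ε) (hy0 : (F.trace).re ≤ 1 + ε) :
    Real.sqrt (∑ i, (bloch F i - bloch ρ i) ^ 2) ≤ Real.sqrt (4 * ε + ε ^ 2) := by
  obtain ⟨hFi0, hFi1, hF10, hFa, hFd, hFdet⟩ := psd_entries' F hF.1
  obtain ⟨_, _, _, hGa, hGd, hGdet⟩ := psd_entries' (1 - F) hF.2
  obtain ⟨hρi0, hρi1, hρ10, hρp, hρq, hρdet⟩ := psd_entries' ρ hρ.1
  set a := (F 0 0).re; set d := (F 1 1).re
  set b1 := (F 0 1).re; set b2 := (F 0 1).im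
  set p := (ρ 0 0).re; set q := (ρ 1 1).re
  set c1 := (ρ 0 1).re; set c2 := (ρ 0 1).im
  have hsub : ∀ i j : Fin 2, (1 - F) i j = (1 : Matrix (Fin 2) (Fin 2) ℂ) i j - F i j := by
    intro i j; simp [Matrix.sub_apply]
  have hGa' : a ≤ 1 := by
    have := hGa; rw [hsub 0 0] at this
    simp [Matrix.one_apply, Complex.sub_re] at this; linarith
  have hGd' : d ≤ 1 := by
    have := hGd; rw [hsub 1 1] at this
    simp [Matrix.one_apply, Complex.sub_re] at this; linarith
  have hGdet' : b1^2 + b2^2 ≤ (1 - a) * (1 - d) := by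
    have := hGdet
    rw [hsub 0 1, hsub 0 0, hsub 1 1] at this
    simpa [Matrix.one_apply, Complex.sub_re, Complex.sub_im] using this
  have hpq : p + q = 1 := by
    have ht := hρ.2
    rw [Matrix.trace_fin_two] at ht
    have := congrArg Complex.re ht
    simpa [Complex.add_re] using this
  have htr := trace_mul_re' F ρ hF10 hρ10 hFi0 hFi1 hρi0 hρi1
  have hprob' : 1 - ε ≤ a*p + d*q + 2*(b1*c1 + b2*c2) := by
    rw [htr] at hprob; linarith
  have hy0' : a + d ≤ 1 + ε := by
    rw [Matrix.trace_fin_two] at hy0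
    simpa [Complex.add_re] using hy0
  obtain ⟨hbF0, hbF1, hbF2⟩ := bloch_eq' F hF10
  obtain ⟨hbρ0, hbρ1, hbρ2⟩ := bloch_eq' ρ hρ10
  have hkey := key_ineq' a d b1 b2 p q c1 c2 ε hFa hFd hFdet hGdet' hρp hρq hpq hρdet hε
    hprob' hy0'
  apply Real.sqrt_le_sqrt
  rw [Fin.sum_univ_three, hbF0, hbF1, hbF2, hbρ0, hbρ1, hbρ2]
  have e : (2*b1 - 2*c1)^2 + (-2*b2 - -2*c2)^2 + ((a - d) - (p - q))^2
      = 4*((b1-c1)^2 + (b2-c2)^2) + ((a-d) - (p-q))^2 := by ring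
  linarith [hkey, e.le, e.ge]
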